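/- Let (B,Φ,H,ℓ) be an augmented rack bialgebra over K. Then B with the multiplication a▹b := Φ(a).b is a rack bialgebra; it is left-regular, namely the map μ'(a⊗b) := S(Φ(a)).b satisfies Σ a⁽¹⁾▹(μ'(a⁽²⁾⊗b)) = ε(a)b = Σ μ'(a⁽¹⁾⊗(a⁽²⁾▹b)) for all a,b ∈ B; and Φ is multiplicative for the rack products: Φ(a▹b) = ad_{Φ(a)}(Φ(b)) for all a,b ∈ B. -/

import Mathlib

open TensorProduct

namespace RackPaper

variable (K : Type*) [CommRing K]
variable (B : Type*) [AddCommGroup B] [Module K B]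

/-- Comultiplication of the tensor-product coalgebra `B ⊗ B`. -/
noncomputable def comul2 (comul : B →ₗ[K] B ⊗[K] B) :
    B ⊗[K] B →ₗ[K] (B ⊗[K] B) ⊗[K] (B ⊗[K] B) :=
  (tensorTensorTensorComm K B B B B).toLinearMap ∘ₗ TensorProduct.map comul comul

/-- Counit of the tensor-product coalgebra `B ⊗ B`. -/
noncomputable def counit2 (counit : B →ₗ[K] K) : B ⊗[K] B →ₗ[K] K :=
  (LinearMap.mul' K K) ∘ₗ TensorProduct.map counit counit

/-- `(B, comul, counit, one)` is a coassociative counital coaugmented coalgebra. -/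
structure IsC3Coalgebra (comul : B →ₗ[K] B ⊗[K] B) (counit : B →ₗ[K] K) (one : B) : Prop where
  coassoc : (TensorProduct.assoc K B B B).toLinearMap ∘ₗ
      (TensorProduct.map comul LinearMap.id) ∘ₗ comul
      = (TensorProduct.map LinearMap.id comul) ∘ₗ comul
  counit_comul : (TensorProduct.lid K B).toLinearMap ∘ₗ
      (TensorProduct.map counit LinearMap.id) ∘ₗ comul = LinearMap.id
  comul_counit : (TensorProduct.rid K B).toLinearMap ∘ₗ
      (TensorProduct.map LinearMap.id counit) ∘ₗ comul = LinearMap.id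
  comul_one : comul one = one ⊗ₜ[K] one
  counit_one : counit one = 1

/-- A rack bialgebra structure on the C³-coalgebra `(B, comul, counit, one)`. -/
structure IsRackBialgebra (comul : B →ₗ[K] B ⊗[K] B) (counit : B →ₗ[K] K) (one : B)
    (mul : B ⊗[K] B →ₗ[K] B) : Prop where
  isC3 : IsC3Coalgebra K B comul counit one
  comul_mul : comul ∘ₗ mul = (TensorProduct.map mul mul) ∘ₗ comul2 K B comul
  counit_mul : counit ∘ₗ mul = counit2 K B counit
  one_mul : ∀ a : B, mul (one ⊗ₜ[K] a) = a
  mul_one : ∀ a : B, mul (a ⊗ₜ[K] one) = counit a • one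
  self_distrib : mul ∘ₗ TensorProduct.map LinearMap.id mul
      = mul ∘ₗ TensorProduct.map mul mul ∘ₗ
          (tensorTensorTensorComm K B B B B).toLinearMap ∘ₗ
          TensorProduct.map comul LinearMap.id

/-- The adjoint representation `h ⊗ h' ↦ ad_h(h') = Σ h⁽¹⁾ h' S(h⁽²⁾)` of a Hopf algebra. -/
noncomputable def adjointMap (H : Type*) [Ring H] [HopfAlgebra K H] :
    H ⊗[K] H →ₗ[K] H :=
  (LinearMap.mul' K H) ∘ₗ
  (TensorProduct.map LinearMap.id (LinearMap.mul' K H)) ∘ₗ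
  (TensorProduct.map LinearMap.id
      (TensorProduct.map LinearMap.id (HopfAlgebra.antipode (R := K)))) ∘ₗ
  (TensorProduct.map LinearMap.id (TensorProduct.comm K H H).toLinearMap) ∘ₗ
  (TensorProduct.assoc K H H H).toLinearMap ∘ₗ
  (TensorProduct.map (Coalgebra.comul) LinearMap.id)


section AuxLemmas

variable {K' : Type*} [CommRing K'] {H' : Type*} [Ring H'] [HopfAlgebra K' H']

lemma adjointMap_repr (p k : H') {ι : Type*} (rp : Coalgebra.Repr K' p ι) :
    adjointMap K' H' (p ⊗ₜ[K'] k)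
      = ∑ j ∈ rp.index, rp.left j * (k * HopfAlgebra.antipode (R := K') (rp.right j)) := by
  rw [adjointMap]
  simp only [LinearMap.comp_apply, TensorProduct.map_tmul, LinearMap.id_apply, ← rp.eq,
    TensorProduct.sum_tmul, map_sum, TensorProduct.assoc_tmul, TensorProduct.comm_tmul,
    LinearMap.mul'_apply, LinearEquiv.coe_coe, LinearMap.id_coe, id_eq]

/-- The key Hopf-algebra identity `Σ ad_{h₁}(k) h₂ = h k`. -/
lemma adjoint_comul_mul (h k : H') :
    (LinearMap.mul' K' H')
      ((TensorProduct.map (adjointMap K' H' ∘ₗ (TensorProduct.mk K' H' H').flip k) LinearMap.id)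
        (Coalgebra.comul (R := K') h)) = h * k := by
  classical
  set r := Coalgebra.Repr.arbitrary K' h with hr
  set a₁ : ∀ i : r.ι, Coalgebra.Repr K' (r.left i) (H' × H') :=
    fun i => Coalgebra.Repr.arbitrary K' (r.left i)
  set a₂ : ∀ i : r.ι, Coalgebra.Repr K' (r.right i) (H' × H') :=
    fun i => Coalgebra.Repr.arbitrary K' (r.right i)
  have key := Coalgebra.sum_tmul_tmul_eq r a₁ a₂
  set T : H' ⊗[K'] (H' ⊗[K'] H') →ₗ[K'] H' :=
    LinearMap.mul' K' H' ∘ₗ TensorProduct.map LinearMap.id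
      (LinearMap.mul' K' H' ∘ₗ TensorProduct.map
        (LinearMap.mulLeft K' k ∘ₗ HopfAlgebra.antipode (R := K')) LinearMap.id) with hT
  have keyT := congrArg T key
  simp only [map_sum, hT, LinearMap.comp_apply, TensorProduct.map_tmul, LinearMap.id_apply,
    LinearMap.mul'_apply, LinearMap.mulLeft_apply] at keyT
  rw [← r.eq]
  simp only [map_sum, TensorProduct.map_tmul, LinearMap.comp_apply, TensorProduct.mk_apply,
    LinearMap.flip_apply, LinearMap.id_apply, LinearMap.mul'_apply]
  have lhs_eq : ∀ i : r.ι, adjointMap K' H' (r.left i ⊗ₜ[K'] k) * r.right i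
      = ∑ j ∈ (a₁ i).index,
          (a₁ i).left j * (k * HopfAlgebra.antipode (R := K') ((a₁ i).right j) * r.right i) := by
    intro i
    rw [adjointMap_repr (r.left i) k (a₁ i), Finset.sum_mul]
    exact Finset.sum_congr rfl fun j _ => mul_assoc _ _ _
  rw [Finset.sum_congr rfl fun i _ => lhs_eq i, keyT]
  have rhs_eq : ∀ i : r.ι, ∑ j ∈ (a₂ i).index,
      r.left i * (k * HopfAlgebra.antipode (R := K') ((a₂ i).left j) * (a₂ i).right j)
      = Coalgebra.counit (R := K') (r.right i) • (r.left i * k) := by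
    intro i
    have hsum : ∑ j ∈ (a₂ i).index,
        HopfAlgebra.antipode (R := K') ((a₂ i).left j) * (a₂ i).right j
        = algebraMap K' H' (Coalgebra.counit (R := K') (r.right i)) :=
      HopfAlgebra.sum_antipode_mul_eq_algebraMap_counit (a₂ i)
    calc ∑ j ∈ (a₂ i).index,
        r.left i * (k * HopfAlgebra.antipode (R := K') ((a₂ i).left j) * (a₂ i).right j)
        = r.left i * (k * ∑ j ∈ (a₂ i).index,
            HopfAlgebra.antipode (R := K') ((a₂ i).left j) * (a₂ i).right j) := by
          rw [Finset.mul_sum, Finset.mul_sum]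
          exact Finset.sum_congr rfl fun j _ => by rw [mul_assoc k]
      _ = Coalgebra.counit (R := K') (r.right i) • (r.left i * k) := by
          rw [hsum, Algebra.smul_def, Algebra.commutes, mul_assoc]
  rw [Finset.sum_congr rfl fun i _ => rhs_eq i]
  have hct := congrArg (TensorProduct.rid K' H') (Coalgebra.sum_tmul_counit_eq (R := K') r)
  simp only [map_sum, TensorProduct.rid_tmul, one_smul] at hct
  calc ∑ i ∈ r.index, Coalgebra.counit (R := K') (r.right i) • (r.left i * k)
      = (∑ i ∈ r.index, Coalgebra.counit (R := K') (r.right i) • r.left i) * k := by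
        rw [Finset.sum_mul]
        exact Finset.sum_congr rfl fun i _ => (smul_mul_assoc _ _ _).symm
    _ = h * k := by rw [hct]

end AuxLemmas

/-- Let `(B, Φ, H, ℓ)` be an augmented rack bialgebra over `K`.  Then `B`,
with multiplication `a ▹ b := Φ(a).b`, is a rack bialgebra; it is left-regular, namely
`μ'(a ⊗ b) := S(Φ(a)).b` satisfies
`Σ a⁽¹⁾ ▹ μ'(a⁽²⁾ ⊗ b) = ε(a) b = Σ μ'(a⁽¹⁾ ⊗ (a⁽²⁾ ▹ b))`; and `Φ` is multiplicative for
the rack products: `Φ(a ▹ b) = ad_{Φ(a)}(Φ(b))`. -/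
theorem augmented_rack_bialgebra_is_rack_bialgebra
    (K : Type*) [CommRing K] [Algebra ℚ K]
    (B : Type*) [AddCommGroup B] [Module K B]
    (comulB : B →ₗ[K] B ⊗[K] B) (counitB : B →ₗ[K] K) (oneB : B)
    (hB : IsC3Coalgebra K B comulB counitB oneB)
    (H : Type*) [Ring H] [HopfAlgebra K H]
    (cocommH : ∀ h : H,
      (TensorProduct.comm K H H) (Coalgebra.comul h) = Coalgebra.comul (R := K) h)
    (Φ : B →ₗ[K] H)
    (hΦ_comul : Coalgebra.comul ∘ₗ Φ = TensorProduct.map Φ Φ ∘ₗ comulB)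
    (hΦ_counit : Coalgebra.counit ∘ₗ Φ = counitB)
    (hΦ_one : Φ oneB = 1)
    (ℓ : H ⊗[K] B →ₗ[K] B)
    (hℓ_one : ∀ b : B, ℓ ((1 : H) ⊗ₜ[K] b) = b)
    (hℓ_mul : ∀ (h h' : H) (b : B), ℓ ((h * h') ⊗ₜ[K] b) = ℓ (h ⊗ₜ[K] ℓ (h' ⊗ₜ[K] b)))
    (hℓ_comul : comulB ∘ₗ ℓ = TensorProduct.map ℓ ℓ ∘ₗ
        (tensorTensorTensorComm K H H B B).toLinearMap ∘ₗ
        TensorProduct.map Coalgebra.comul comulB)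
    (hℓ_counit : counitB ∘ₗ ℓ
        = LinearMap.mul' K K ∘ₗ TensorProduct.map Coalgebra.counit counitB)
    (hℓ_oneB : ∀ h : H, ℓ (h ⊗ₜ[K] oneB) = Coalgebra.counit (R := K) h • oneB)
    (hΦ_equiv : Φ ∘ₗ ℓ = adjointMap K H ∘ₗ TensorProduct.map LinearMap.id Φ) :
    IsRackBialgebra K B comulB counitB oneB (ℓ ∘ₗ TensorProduct.map Φ LinearMap.id) ∧
    ((ℓ ∘ₗ TensorProduct.map Φ LinearMap.id) ∘ₗ
        TensorProduct.map LinearMap.id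
          (ℓ ∘ₗ TensorProduct.map (HopfAlgebra.antipode (R := K) ∘ₗ Φ) LinearMap.id) ∘ₗ
        (TensorProduct.assoc K B B B).toLinearMap ∘ₗ TensorProduct.map comulB LinearMap.id
      = (TensorProduct.lid K B).toLinearMap ∘ₗ TensorProduct.map counitB LinearMap.id) ∧
    ((ℓ ∘ₗ TensorProduct.map (HopfAlgebra.antipode (R := K) ∘ₗ Φ) LinearMap.id) ∘ₗ
        TensorProduct.map LinearMap.id (ℓ ∘ₗ TensorProduct.map Φ LinearMap.id) ∘ₗ
        (TensorProduct.assoc K B B B).toLinearMap ∘ₗ TensorProduct.map comulB LinearMap.id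
      = (TensorProduct.lid K B).toLinearMap ∘ₗ TensorProduct.map counitB LinearMap.id) ∧
    (Φ ∘ₗ (ℓ ∘ₗ TensorProduct.map Φ LinearMap.id)
      = adjointMap K H ∘ₗ TensorProduct.map Φ Φ) := by
  classical
  have hΦ_comul' : ∀ a : B, Coalgebra.comul (R := K) (Φ a)
      = TensorProduct.map Φ Φ (comulB a) := fun a => LinearMap.congr_fun hΦ_comul a
  have hΦ_counit' : ∀ a : B, Coalgebra.counit (R := K) (Φ a) = counitB a :=
    fun a => LinearMap.congr_fun hΦ_counit a
  have hℓ_comul' : ∀ (h : H) (b : B), comulB (ℓ (h ⊗ₜ[K] b)) =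
      TensorProduct.map ℓ ℓ ((tensorTensorTensorComm K H H B B)
        (Coalgebra.comul (R := K) h ⊗ₜ[K] comulB b)) := by
    intro h b
    simpa using LinearMap.congr_fun hℓ_comul (h ⊗ₜ[K] b)
  have hℓ_counit' : ∀ (h : H) (b : B), counitB (ℓ (h ⊗ₜ[K] b))
      = Coalgebra.counit (R := K) h * counitB b := by
    intro h b
    simpa using LinearMap.congr_fun hℓ_counit (h ⊗ₜ[K] b)
  have hΦ_equiv' : ∀ (h : H) (b : B), Φ (ℓ (h ⊗ₜ[K] b)) = adjointMap K H (h ⊗ₜ[K] Φ b) := by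
    intro h b
    simpa using LinearMap.congr_fun hΦ_equiv (h ⊗ₜ[K] b)
  have hℓ_alg : ∀ (r : K) (b : B), ℓ (algebraMap K H r ⊗ₜ[K] b) = r • b := by
    intro r b
    rw [Algebra.algebraMap_eq_smul_one, ← TensorProduct.smul_tmul', map_smul, hℓ_one]
  have hmul_tmul : ∀ (a b : B),
      (ℓ ∘ₗ TensorProduct.map Φ LinearMap.id) (a ⊗ₜ[K] b) = ℓ (Φ a ⊗ₜ[K] b) := by
    intro a b; simp
  refine ⟨⟨hB, ?_, ?_, ?_, ?_, ?_⟩, ?_, ?_, ?_⟩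
  · -- comul_mul
    have key : (TensorProduct.map ℓ ℓ) ∘ₗ (tensorTensorTensorComm K H H B B).toLinearMap ∘ₗ
          (TensorProduct.map (TensorProduct.map Φ Φ) LinearMap.id)
        = (TensorProduct.map (ℓ ∘ₗ TensorProduct.map Φ LinearMap.id)
            (ℓ ∘ₗ TensorProduct.map Φ LinearMap.id)) ∘ₗ
          (tensorTensorTensorComm K B B B B).toLinearMap := by
      apply TensorProduct.ext_fourfold'
      intro x y u v
      simp [TensorProduct.tensorTensorTensorComm_tmul]
    apply TensorProduct.ext'
    intro a b
    simp only [LinearMap.comp_apply, TensorProduct.map_tmul, LinearMap.id_apply, comul2]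
    rw [hℓ_comul' (Φ a) b, hΦ_comul' a]
    simpa using LinearMap.congr_fun key (comulB a ⊗ₜ[K] comulB b)
  · -- counit_mul
    apply TensorProduct.ext'
    intro a b
    simp only [LinearMap.comp_apply, TensorProduct.map_tmul, LinearMap.id_apply, counit2,
      LinearMap.mul'_apply]
    rw [hℓ_counit', hΦ_counit']
  · -- one_mul
    intro a
    simp [hΦ_one, hℓ_one]
  · -- mul_one
    intro a
    simp [hℓ_oneB, hΦ_counit']
  · -- self_distrib
    apply TensorProduct.ext'
    intro a t
    induction t using TensorProduct.induction_on with
    | zero => simp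
    | add t₁ t₂ h₁ h₂ =>
        simp only [TensorProduct.tmul_add, map_add] at h₁ h₂ ⊢
        rw [h₁, h₂]
    | tmul b c =>
      simp only [LinearMap.comp_apply, TensorProduct.map_tmul, LinearMap.id_apply,
        LinearEquiv.coe_coe]
      have keyR : ∀ t : B ⊗[K] B,
          (ℓ ∘ₗ TensorProduct.map Φ LinearMap.id)
            ((TensorProduct.map (ℓ ∘ₗ TensorProduct.map Φ LinearMap.id)
              (ℓ ∘ₗ TensorProduct.map Φ LinearMap.id))
              ((tensorTensorTensorComm K B B B B) (t ⊗ₜ[K] (b ⊗ₜ[K] c))))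
          = ℓ ((LinearMap.mul' K H
              ((TensorProduct.map (adjointMap K H ∘ₗ (TensorProduct.mk K H H).flip (Φ b))
                  LinearMap.id) (TensorProduct.map Φ Φ t))) ⊗ₜ[K] c) := by
        intro t
        induction t using TensorProduct.induction_on with
        | zero => simp
        | add t₁ t₂ h₁ h₂ =>
            simp only [TensorProduct.add_tmul, map_add, TensorProduct.add_tmul] at h₁ h₂ ⊢
            rw [h₁, h₂]
        | tmul x y =>
            simp only [TensorProduct.tensorTensorTensorComm_tmul, TensorProduct.map_tmul,
              LinearMap.comp_apply, LinearMap.id_apply, TensorProduct.mk_apply,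
              LinearMap.flip_apply, LinearMap.mul'_apply, LinearEquiv.coe_coe]
            rw [← hℓ_mul, hΦ_equiv']
      simp only [LinearMap.comp_apply] at keyR
      rw [keyR (comulB a), ← hΦ_comul' a, adjoint_comul_mul, hℓ_mul]
  · -- left regularity, first identity
    apply TensorProduct.ext'
    intro a b
    have keyF : ∀ t : B ⊗[K] B,
        (ℓ ∘ₗ TensorProduct.map Φ LinearMap.id)
          ((TensorProduct.map LinearMap.id
            (ℓ ∘ₗ TensorProduct.map (HopfAlgebra.antipode (R := K) ∘ₗ Φ) LinearMap.id))
            ((TensorProduct.assoc K B B B) (t ⊗ₜ[K] b)))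
        = ℓ ((LinearMap.mul' K H
            ((HopfAlgebra.antipode (R := K)).lTensor H (TensorProduct.map Φ Φ t))) ⊗ₜ[K] b) := by
      intro t
      induction t using TensorProduct.induction_on with
      | zero => simp
      | add t₁ t₂ h₁ h₂ =>
          simp only [TensorProduct.add_tmul, map_add] at h₁ h₂ ⊢
          rw [h₁, h₂]
      | tmul x y =>
          simp only [TensorProduct.assoc_tmul, TensorProduct.map_tmul, LinearMap.comp_apply,
            LinearMap.id_apply, LinearMap.lTensor_tmul, LinearMap.mul'_apply,
            LinearEquiv.coe_coe]
          rw [← hℓ_mul]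
    simp only [LinearMap.comp_apply, TensorProduct.map_tmul, LinearMap.id_apply,
      LinearEquiv.coe_coe]
    simp only [LinearMap.comp_apply] at keyF
    rw [keyF (comulB a), ← hΦ_comul' a, HopfAlgebra.mul_antipode_lTensor_comul_apply,
      hℓ_alg, hΦ_counit', TensorProduct.lid_tmul]
  · -- left regularity, second identity
    apply TensorProduct.ext'
    intro a b
    have keyG : ∀ t : B ⊗[K] B,
        (ℓ ∘ₗ TensorProduct.map (HopfAlgebra.antipode (R := K) ∘ₗ Φ) LinearMap.id)
          ((TensorProduct.map LinearMap.id (ℓ ∘ₗ TensorProduct.map Φ LinearMap.id))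
            ((TensorProduct.assoc K B B B) (t ⊗ₜ[K] b)))
        = ℓ ((LinearMap.mul' K H
            ((HopfAlgebra.antipode (R := K)).rTensor H (TensorProduct.map Φ Φ t))) ⊗ₜ[K] b) := by
      intro t
      induction t using TensorProduct.induction_on with
      | zero => simp
      | add t₁ t₂ h₁ h₂ =>
          simp only [TensorProduct.add_tmul, map_add] at h₁ h₂ ⊢
          rw [h₁, h₂]
      | tmul x y =>
          simp only [TensorProduct.assoc_tmul, TensorProduct.map_tmul, LinearMap.comp_apply,
            LinearMap.id_apply, LinearMap.rTensor_tmul, LinearMap.mul'_apply,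
            LinearEquiv.coe_coe]
          rw [← hℓ_mul]
    simp only [LinearMap.comp_apply, TensorProduct.map_tmul, LinearMap.id_apply,
      LinearEquiv.coe_coe]
    simp only [LinearMap.comp_apply] at keyG
    rw [keyG (comulB a), ← hΦ_comul' a, HopfAlgebra.mul_antipode_rTensor_comul_apply,
      hℓ_alg, hΦ_counit', TensorProduct.lid_tmul]
  · -- multiplicativity of Φ
    apply TensorProduct.ext'
    intro a b
    simp only [LinearMap.comp_apply, TensorProduct.map_tmul, LinearMap.id_apply]
    rw [hΦ_equiv']


end RackPaper
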